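/- Let G_1 and G_2 be vertex-disjoint graphs with list-size functions f_1, f_2, and let G = G_1 ∪ G_2 (disjoint union) with f = f_1 ∪ f_2. Then m_c(G, f) = m_c(G_1, f_1) · m_c(G_2, f_2). -/

import Mathlib

/-- A graph `G` with list sizes `f` is `f`-choosable if for every assignment `L` of lists
of colours with `|L v| = f v` for all `v`, there is a proper colouring of `G` choosing
each vertex's colour from its list. -/
def Choosable {V : Type*} (G : SimpleGraph V) (f : V → ℕ) : Prop :=
  ∀ L : V → Finset ℕ, (∀ v, (L v).card = f v) →
    ∃ c : V → ℕ, (∀ v, c v ∈ L v) ∧ ∀ ⦃u v⦄, G.Adj u v → c u ≠ c v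

/-- The join `G ⊕ K̄_m` of a graph `G` with the edgeless graph on `m` vertices. -/
def joinK {V : Type*} (G : SimpleGraph V) (m : ℕ) : SimpleGraph (V ⊕ Fin m) where
  Adj a b :=
    match a, b with
    | Sum.inl u, Sum.inl v => G.Adj u v
    | Sum.inl _, Sum.inr _ => True
    | Sum.inr _, Sum.inl _ => True
    | Sum.inr _, Sum.inr _ => False
  symm := by
    constructor
    rintro (u | i) (v | j) h
    · exact G.adj_symm h
    · trivial
    · trivial
    · exact h
  loopless := by
    constructor
    rintro (u | i) h
    · exact G.irrefl h
    · exact h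

/-- `m_c(G, f)`: the least `m` such that the join `G ⊕ K̄_m`, with list sizes `f` on `G`
and `|V(G)|` on each of the `m` new vertices, is not choosable. -/
noncomputable def mc {V : Type*} [Fintype V] (G : SimpleGraph V) (f : V → ℕ) : ℕ :=
  sInf {m | ¬ Choosable (joinK G m) (Sum.elim f fun _ => Fintype.card V)}

open Finset

lemma joinK_adj_inl_inl {V : Type*} {G : SimpleGraph V} {m : ℕ} {u v : V}
    (h : G.Adj u v) : (joinK G m).Adj (Sum.inl u) (Sum.inl v) := h

lemma joinK_adj_inl_inr {V : Type*} {G : SimpleGraph V} {m : ℕ} (u : V) (i : Fin m) :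
    (joinK G m).Adj (Sum.inl u) (Sum.inr i) := trivial

/-- If a specific list assignment on `joinK G m` admits no proper colouring, then every proper
colouring of `G` from the base lists "uses up" some join vertex's entire list. -/
lemma blocked {V : Type*} (G : SimpleGraph V) {m : ℕ} {L : V ⊕ Fin m → Finset ℕ}
    (h : ¬ ∃ c : V ⊕ Fin m → ℕ, (∀ v, c v ∈ L v) ∧
      ∀ ⦃u v⦄, (joinK G m).Adj u v → c u ≠ c v)
    {c₀ : V → ℕ} (hc₀ : ∀ v, c₀ v ∈ L (Sum.inl v))
    (hp : ∀ ⦃u v⦄, G.Adj u v → c₀ u ≠ c₀ v) :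
    ∃ i, ∀ x ∈ L (Sum.inr i), ∃ v, c₀ v = x := by
  by_contra hb
  push_neg at hb
  choose x hx1 hx2 using hb
  apply h
  refine ⟨Sum.elim c₀ x, ?_, ?_⟩
  · rintro (v | i)
    · exact hc₀ v
    · exact hx1 i
  · rintro (u | i) (v | j) hadj
    · exact hp hadj
    · exact fun hh => hx2 j u hh
    · exact fun hh => hx2 i v hh.symm
    · exact hadj.elim

/-- Every `(G, f)` has some `m` making the join non-choosable. -/
lemma exists_bad {V : Type*} [Fintype V] (G : SimpleGraph V) (f : V → ℕ) :
    {m | ¬ Choosable (joinK G m) (Sum.elim f fun _ => Fintype.card V)}.Nonempty := by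
  classical
  set e : V → ℕ := fun v => (Fintype.equivFin V v : ℕ) with he
  have hei : Function.Injective e := fun a b h => (Fintype.equivFin V).injective (Fin.ext h)
  set L : V → Finset ℕ := fun v => (Finset.range (f v)).image (fun t => Nat.pair (e v) t) with hL
  have hLcard : ∀ v, (L v).card = f v := by
    intro v
    rw [hL]
    rw [Finset.card_image_of_injective _ (fun t t' h => (Nat.pair_eq_pair.mp h).2)]
    exact Finset.card_range _
  have hdisj : ∀ v w x, x ∈ L v → x ∈ L w → v = w := by
    intro v w x hv hw
    simp only [hL, Finset.mem_image] at hv hw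
    obtain ⟨t, _, ht⟩ := hv
    obtain ⟨s, _, hs⟩ := hw
    apply hei
    have := ht.trans hs.symm
    exact (Nat.pair_eq_pair.mp this).1
  set m := ∏ v, f v with hm
  have hcard : Fintype.card (∀ v, (L v : Finset ℕ)) = m := by
    rw [Fintype.card_pi]
    simp [hLcard, hm]
  let ψ : Fin m ≃ ∀ v, (L v : Finset ℕ) := (Fintype.equivFinOfCardEq hcard).symm
  refine ⟨m, ?_⟩
  intro hC
  obtain ⟨c, hc, hpr⟩ := hC
    (Sum.elim L (fun i => Finset.univ.image (fun v => ((ψ i v : ℕ)))))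
    (by
      rintro (v | i)
      · simpa using hLcard v
      · simp only [Sum.elim_inr]
        rw [Finset.card_image_of_injective]
        · simp
        · intro v w hvw
          simp only at hvw
          refine hdisj v w _ (ψ i v).2 ?_
          rw [hvw]; exact (ψ i w).2)
  set σ : ∀ v, (L v : Finset ℕ) := fun v => ⟨c (Sum.inl v), hc (Sum.inl v)⟩ with hσ
  set i := ψ.symm σ with hi
  have hmem := hc (Sum.inr i)
  simp only [Sum.elim_inr, Finset.mem_image, Finset.mem_univ, true_and] at hmem
  obtain ⟨v, hv⟩ := hmem
  have hψ : ψ i = σ := by rw [hi]; exact ψ.apply_symm_apply σ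
  rw [hψ] at hv
  exact hpr (joinK_adj_inl_inr v i) hv

lemma choosable_base {V : Type*} [Fintype V] {G : SimpleGraph V} {f : V → ℕ}
    (h : Choosable (joinK G 0) (Sum.elim f fun _ => Fintype.card V)) : Choosable G f := by
  intro L hL
  obtain ⟨c, hc, hp⟩ := h (Sum.elim L (fun _ => ∅)) (by
    rintro (v | i)
    · simpa using hL v
    · exact i.elim0)
  exact ⟨fun v => c (Sum.inl v), fun v => hc (Sum.inl v),
    fun u v h' => hp (joinK_adj_inl_inl h')⟩

lemma shift_bad {W : Type*} {H : SimpleGraph W} {L : W → Finset ℕ} (N : ℕ)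
    (h : ¬ ∃ c : W → ℕ, (∀ v, c v ∈ L v) ∧ ∀ ⦃u v⦄, H.Adj u v → c u ≠ c v) :
    ¬ ∃ c : W → ℕ, (∀ v, c v ∈ (L v).image (· + N)) ∧ ∀ ⦃u v⦄, H.Adj u v → c u ≠ c v := by
  rintro ⟨c, hc, hp⟩
  apply h
  refine ⟨fun v => c v - N, fun v => ?_, fun u v hadj heq => ?_⟩
  · obtain ⟨x, hx, he⟩ := Finset.mem_image.mp (hc v)
    have hxx : c v - N = x := by omega
    show c v - N ∈ L v
    rw [hxx]
    exact hx
  · obtain ⟨x, _, hxe⟩ := Finset.mem_image.mp (hc u)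
    obtain ⟨y, _, hye⟩ := Finset.mem_image.mp (hc v)
    have heq' : c u - N = c v - N := heq
    exact hp hadj (by omega)

lemma prod_bad {V₁ V₂ : Type*} [Fintype V₁] [Fintype V₂]
    (G₁ : SimpleGraph V₁) (G₂ : SimpleGraph V₂) (f₁ : V₁ → ℕ) (f₂ : V₂ → ℕ) {a b : ℕ}
    (h₁ : ¬ Choosable (joinK G₁ a) (Sum.elim f₁ fun _ => Fintype.card V₁))
    (h₂ : ¬ Choosable (joinK G₂ b) (Sum.elim f₂ fun _ => Fintype.card V₂)) :
    ¬ Choosable (joinK (G₁.sum G₂) (a * b))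
      (Sum.elim (Sum.elim f₁ f₂) fun _ => Fintype.card (V₁ ⊕ V₂)) := by
  unfold Choosable at h₁ h₂
  obtain ⟨A, hA'⟩ := not_forall.mp h₁
  rw [Classical.not_imp] at hA'
  obtain ⟨hA, hbad₁⟩ := hA'
  obtain ⟨B, hB'x⟩ := not_forall.mp h₂
  rw [Classical.not_imp] at hB'x
  obtain ⟨hB, hbad₂⟩ := hB'x
  set N := (Finset.univ.sup (fun v => (A v).sup id)) + 1 with hN
  have hAN : ∀ v x, x ∈ A v → x < N := by
    intro v x hx
    have h1 : x ≤ (A v).sup id := Finset.le_sup (f := id) hx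
    have h2 : (A v).sup id ≤ Finset.univ.sup (fun v => (A v).sup id) :=
      Finset.le_sup (f := fun v => (A v).sup id) (Finset.mem_univ v)
    omega
  set B' := fun v => (B v).image (· + N) with hB'def
  have hB' : ∀ v, (B' v).card = Sum.elim f₂ (fun _ => Fintype.card V₂) v := by
    intro v
    rw [hB'def]
    rw [Finset.card_image_of_injective _ (add_left_injective N)]
    exact hB v
  have hB'N : ∀ v x, x ∈ B' v → N ≤ x := by
    intro v x hx
    obtain ⟨y, _, he⟩ := Finset.mem_image.mp hx
    omega
  have hbad₂' : ¬ ∃ c : V₂ ⊕ Fin b → ℕ, (∀ v, c v ∈ B' v) ∧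
      ∀ ⦃u v⦄, (joinK G₂ b).Adj u v → c u ≠ c v := shift_bad N hbad₂
  intro hC
  obtain ⟨c, hc, hp⟩ := hC
    (Sum.elim (Sum.elim (fun v => A (Sum.inl v)) (fun v => B' (Sum.inl v)))
      (fun k => A (Sum.inr (finProdFinEquiv.symm k).1) ∪ B' (Sum.inr (finProdFinEquiv.symm k).2)))
    (by
      rintro ((v | v) | k)
      · simpa using hA (Sum.inl v)
      · simpa using hB' (Sum.inl v)
      · simp only [Sum.elim_inr]
        rw [Finset.card_union_of_disjoint (by
          rw [Finset.disjoint_left]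
          intro x hx hx'
          exact absurd (hB'N _ _ hx') (by simpa using hAN _ _ hx))]
        have := hA (Sum.inr (finProdFinEquiv.symm k).1)
        have := hB' (Sum.inr (finProdFinEquiv.symm k).2)
        simp only [Sum.elim_inr] at *
        rw [Fintype.card_sum]
        omega)
  have hc₁ : ∀ v, c (Sum.inl (Sum.inl v)) ∈ A (Sum.inl v) := fun v => hc _
  have hp₁ : ∀ ⦃u v⦄, G₁.Adj u v →
      c (Sum.inl (Sum.inl u)) ≠ c (Sum.inl (Sum.inl v)) := by
    intro u v hadj
    exact hp (by exact hadj)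
  obtain ⟨i, hi⟩ := blocked G₁ hbad₁ hc₁ hp₁
  have hc₂ : ∀ v, c (Sum.inl (Sum.inr v)) ∈ B' (Sum.inl v) := fun v => hc _
  have hp₂ : ∀ ⦃u v⦄, G₂.Adj u v →
      c (Sum.inl (Sum.inr u)) ≠ c (Sum.inl (Sum.inr v)) := by
    intro u v hadj
    exact hp (by exact hadj)
  obtain ⟨j, hj⟩ := blocked G₂ hbad₂' hc₂ hp₂
  set k := finProdFinEquiv (i, j) with hk
  have hck := hc (Sum.inr k)
  simp only [Sum.elim_inr, hk, Equiv.symm_apply_apply, Finset.mem_union] at hck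
  rcases hck with hm | hm
  · obtain ⟨v, hv⟩ := hi _ hm
    exact hp (joinK_adj_inl_inr (Sum.inl v) k) hv
  · obtain ⟨v, hv⟩ := hj _ hm
    exact hp (joinK_adj_inl_inr (Sum.inr v) k) hv

lemma hard {V₁ V₂ : Type*} [Fintype V₁] [Fintype V₂]
    (G₁ : SimpleGraph V₁) (G₂ : SimpleGraph V₂) (f₁ : V₁ → ℕ) (f₂ : V₂ → ℕ) (m : ℕ)
    (hbad : ¬ Choosable (joinK (G₁.sum G₂) m)
      (Sum.elim (Sum.elim f₁ f₂) fun _ => Fintype.card (V₁ ⊕ V₂))) :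
    mc G₁ f₁ * mc G₂ f₂ ≤ m := by
  classical
  rcases Nat.eq_zero_or_pos (mc G₁ f₁) with h | hm₁pos
  · simp [h]
  rcases Nat.eq_zero_or_pos (mc G₂ f₂) with h | hm₂pos
  · simp [h]
  have hch₁ : Choosable G₁ f₁ := choosable_base (not_not.mp (Nat.notMem_of_lt_sInf hm₁pos))
  have hch₂ : Choosable G₂ f₂ := choosable_base (not_not.mp (Nat.notMem_of_lt_sInf hm₂pos))
  -- extract the bad instance
  unfold Choosable at hbad
  obtain ⟨L, hL'⟩ := not_forall.mp hbad
  rw [Classical.not_imp] at hL'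
  obtain ⟨hL, hbadL⟩ := hL'
  set n₁ := Fintype.card V₁ with hn₁
  set n₂ := Fintype.card V₂ with hn₂
  set L₁ : V₁ → Finset ℕ := fun v => L (Sum.inl (Sum.inl v)) with hL₁def
  set L₂ : V₂ → Finset ℕ := fun v => L (Sum.inl (Sum.inr v)) with hL₂def
  have hL₁ : ∀ v, (L₁ v).card = f₁ v := fun v => hL (Sum.inl (Sum.inl v))
  have hL₂ : ∀ v, (L₂ v).card = f₂ v := fun v => hL (Sum.inl (Sum.inr v))
  have hLS : ∀ k, (L (Sum.inr k)).card = n₁ + n₂ := by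
    intro k
    have := hL (Sum.inr k)
    simpa [Fintype.card_sum] using this
  -- the key pairing property
  have key : ∀ (c₁ : V₁ → ℕ) (c₂ : V₂ → ℕ),
      (∀ v, c₁ v ∈ L₁ v) → (∀ ⦃u v⦄, G₁.Adj u v → c₁ u ≠ c₁ v) →
      (∀ v, c₂ v ∈ L₂ v) → (∀ ⦃u v⦄, G₂.Adj u v → c₂ u ≠ c₂ v) →
      ∃ k, L (Sum.inr k) = Finset.image c₁ Finset.univ ∪ Finset.image c₂ Finset.univ ∧
        Disjoint (Finset.image c₁ Finset.univ) (Finset.image c₂ Finset.univ) ∧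
        (Finset.image c₁ Finset.univ).card = n₁ ∧
        (Finset.image c₂ Finset.univ).card = n₂ := by
    intro c₁ c₂ hc₁ hp₁ hc₂ hp₂
    obtain ⟨k, hk⟩ := blocked (G₁.sum G₂) hbadL (c₀ := Sum.elim c₁ c₂)
      (by rintro (v | v)
          · exact hc₁ v
          · exact hc₂ v)
      (by rintro (u | u) (v | v) hadj
          · exact hp₁ hadj
          · simp [SimpleGraph.sum_adj] at hadj
          · simp [SimpleGraph.sum_adj] at hadj
          · exact hp₂ hadj)
    set R := Finset.image c₁ Finset.univ with hRdef
    set Q := Finset.image c₂ Finset.univ with hQdef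
    have hsub : L (Sum.inr k) ⊆ R ∪ Q := by
      intro x hx
      obtain ⟨w, hw⟩ := hk x hx
      rcases w with v | v
      · exact Finset.mem_union_left _ (Finset.mem_image.mpr ⟨v, Finset.mem_univ v, hw⟩)
      · exact Finset.mem_union_right _ (Finset.mem_image.mpr ⟨v, Finset.mem_univ v, hw⟩)
    have hRle : R.card ≤ n₁ := by
      calc R.card ≤ (Finset.univ : Finset V₁).card := Finset.card_image_le
        _ = n₁ := Finset.card_univ
    have hQle : Q.card ≤ n₂ := by
      calc Q.card ≤ (Finset.univ : Finset V₂).card := Finset.card_image_le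
        _ = n₂ := Finset.card_univ
    have hcard : n₁ + n₂ ≤ (R ∪ Q).card := by
      rw [← hLS k]
      exact Finset.card_le_card hsub
    have hunion : (R ∪ Q).card ≤ R.card + Q.card := Finset.card_union_le _ _
    have hR : R.card = n₁ := by omega
    have hQ : Q.card = n₂ := by omega
    have hic := Finset.card_union_add_card_inter R Q
    have hinter : (R ∩ Q).card = 0 := by omega
    have hdisj : Disjoint R Q := by
      rw [Finset.disjoint_iff_inter_eq_empty]
      exact Finset.card_eq_zero.mp hinter
    have hEq : L (Sum.inr k) = R ∪ Q :=
      Finset.eq_of_subset_of_card_le hsub (by rw [hLS k]; omega)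
    exact ⟨k, hEq, hdisj, hR, hQ⟩
  -- the families of colour ranges
  set U₁ : Finset ℕ := Finset.univ.biUnion L₁ with hU₁
  set U₂ : Finset ℕ := Finset.univ.biUnion L₂ with hU₂
  set ℛ : Finset (Finset ℕ) := U₁.powerset.filter (fun R => ∃ c₁ : V₁ → ℕ,
      (∀ v, c₁ v ∈ L₁ v) ∧ (∀ ⦃u v⦄, G₁.Adj u v → c₁ u ≠ c₁ v) ∧
        Finset.image c₁ Finset.univ = R) with hℛdef
  set 𝒬 : Finset (Finset ℕ) := U₂.powerset.filter (fun Q => ∃ c₂ : V₂ → ℕ,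
      (∀ v, c₂ v ∈ L₂ v) ∧ (∀ ⦃u v⦄, G₂.Adj u v → c₂ u ≠ c₂ v) ∧
        Finset.image c₂ Finset.univ = Q) with h𝒬def
  have hmemℛ : ∀ (c₁ : V₁ → ℕ), (∀ v, c₁ v ∈ L₁ v) →
      (∀ ⦃u v⦄, G₁.Adj u v → c₁ u ≠ c₁ v) → Finset.image c₁ Finset.univ ∈ ℛ := by
    intro c₁ hc₁ hp₁
    rw [hℛdef, Finset.mem_filter, Finset.mem_powerset]
    refine ⟨?_, c₁, hc₁, hp₁, rfl⟩
    intro x hx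
    obtain ⟨v, _, hv⟩ := Finset.mem_image.mp hx
    exact Finset.mem_biUnion.mpr ⟨v, Finset.mem_univ v, hv ▸ hc₁ v⟩
  have hmem𝒬 : ∀ (c₂ : V₂ → ℕ), (∀ v, c₂ v ∈ L₂ v) →
      (∀ ⦃u v⦄, G₂.Adj u v → c₂ u ≠ c₂ v) → Finset.image c₂ Finset.univ ∈ 𝒬 := by
    intro c₂ hc₂ hp₂
    rw [h𝒬def, Finset.mem_filter, Finset.mem_powerset]
    refine ⟨?_, c₂, hc₂, hp₂, rfl⟩
    intro x hx
    obtain ⟨v, _, hv⟩ := Finset.mem_image.mp hx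
    exact Finset.mem_biUnion.mpr ⟨v, Finset.mem_univ v, hv ▸ hc₂ v⟩
  obtain ⟨c₁0, hc₁0, hp₁0⟩ := hch₁ L₁ hL₁
  obtain ⟨c₂0, hc₂0, hp₂0⟩ := hch₂ L₂ hL₂
  have hR0mem := hmemℛ c₁0 hc₁0 hp₁0
  have hQ0mem := hmem𝒬 c₂0 hc₂0 hp₂0
  -- the pairing property on the families
  have hP : ∀ R ∈ ℛ, ∀ Q ∈ 𝒬, ∃ k, L (Sum.inr k) = R ∪ Q ∧ Disjoint R Q ∧
      R.card = n₁ ∧ Q.card = n₂ := by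
    intro R hR Q hQ
    rw [hℛdef, Finset.mem_filter] at hR
    rw [h𝒬def, Finset.mem_filter] at hQ
    obtain ⟨-, c₁, hc₁, hp₁, rfl⟩ := hR
    obtain ⟨-, c₂, hc₂, hp₂, rfl⟩ := hQ
    exact key c₁ c₂ hc₁ hp₁ hc₂ hp₂
  -- |ℛ| ≥ m₁
  have hℛcard : mc G₁ f₁ ≤ ℛ.card := by
    by_contra hlt
    push_neg at hlt
    have hcho : Choosable (joinK G₁ ℛ.card) (Sum.elim f₁ fun _ => Fintype.card V₁) :=
      not_not.mp (Nat.notMem_of_lt_sInf hlt)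
    set enum := ℛ.equivFin with henum
    obtain ⟨c, hcmem, hcp⟩ := hcho (Sum.elim L₁ (fun i => ((enum.symm i : ℛ) : Finset ℕ)))
      (by
        rintro (v | i)
        · exact hL₁ v
        · simp only [Sum.elim_inr]
          obtain ⟨k, -, -, hRc, -⟩ := hP _ (enum.symm i).2 _ hQ0mem
          exact hRc)
    have hc₁m : ∀ v, c (Sum.inl v) ∈ L₁ v := fun v => hcmem (Sum.inl v)
    have hc₁p : ∀ ⦃u v⦄, G₁.Adj u v → c (Sum.inl u) ≠ c (Sum.inl v) := by
      intro u v hadj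
      exact hcp (show (joinK G₁ ℛ.card).Adj (Sum.inl u) (Sum.inl v) from hadj)
    have hRmem : Finset.image (fun v => c (Sum.inl v)) Finset.univ ∈ ℛ :=
      hmemℛ _ hc₁m hc₁p
    set i := enum ⟨_, hRmem⟩ with hidef
    have h1 := hcmem (Sum.inr i)
    have h2 : ((enum.symm i : ℛ) : Finset ℕ) =
        Finset.image (fun v => c (Sum.inl v)) Finset.univ := by
      rw [hidef, Equiv.symm_apply_apply]
    rw [Sum.elim_inr, h2] at h1
    obtain ⟨v, -, hv⟩ := Finset.mem_image.mp h1
    exact hcp (joinK_adj_inl_inr v i) hv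
  -- |𝒬| ≥ m₂
  have h𝒬card : mc G₂ f₂ ≤ 𝒬.card := by
    by_contra hlt
    push_neg at hlt
    have hcho : Choosable (joinK G₂ 𝒬.card) (Sum.elim f₂ fun _ => Fintype.card V₂) :=
      not_not.mp (Nat.notMem_of_lt_sInf hlt)
    set enum := 𝒬.equivFin with henum
    obtain ⟨c, hcmem, hcp⟩ := hcho (Sum.elim L₂ (fun i => ((enum.symm i : 𝒬) : Finset ℕ)))
      (by
        rintro (v | i)
        · exact hL₂ v
        · simp only [Sum.elim_inr]
          obtain ⟨k, -, -, -, hQc⟩ := hP _ hR0mem _ (enum.symm i).2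
          exact hQc)
    have hc₂m : ∀ v, c (Sum.inl v) ∈ L₂ v := fun v => hcmem (Sum.inl v)
    have hc₂p : ∀ ⦃u v⦄, G₂.Adj u v → c (Sum.inl u) ≠ c (Sum.inl v) := by
      intro u v hadj
      exact hcp (show (joinK G₂ 𝒬.card).Adj (Sum.inl u) (Sum.inl v) from hadj)
    have hQmem : Finset.image (fun v => c (Sum.inl v)) Finset.univ ∈ 𝒬 :=
      hmem𝒬 _ hc₂m hc₂p
    set i := enum ⟨_, hQmem⟩ with hidef
    have h1 := hcmem (Sum.inr i)
    have h2 : ((enum.symm i : 𝒬) : Finset ℕ) =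
        Finset.image (fun v => c (Sum.inl v)) Finset.univ := by
      rw [hidef, Equiv.symm_apply_apply]
    rw [Sum.elim_inr, h2] at h1
    obtain ⟨v, -, hv⟩ := Finset.mem_image.mp h1
    exact hcp (joinK_adj_inl_inr v i) hv
  -- a default join vertex, giving m > 0
  obtain ⟨k0, -⟩ := hP _ hR0mem _ hQ0mem
  -- the injection ℛ × 𝒬 → Fin m
  have hcount : (ℛ ×ˢ 𝒬).card ≤ (Finset.univ : Finset (Fin m)).card := by
    apply Finset.card_le_card_of_injOn
      (fun p => if h : ∃ k : Fin m, L (Sum.inr k) = p.1 ∪ p.2 then h.choose else k0)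
    · intro p _
      exact Finset.mem_univ _
    · intro p hp p' hp' heq
      simp only [Finset.mem_coe, Finset.mem_product] at hp hp'
      obtain ⟨k, hk, -, hRc, hQc⟩ := hP p.1 hp.1 p.2 hp.2
      obtain ⟨k', hk', -, hRc', hQc'⟩ := hP p'.1 hp'.1 p'.2 hp'.2
      have he1 : ∃ k : Fin m, L (Sum.inr k) = p.1 ∪ p.2 := ⟨k, hk⟩
      have he2 : ∃ k : Fin m, L (Sum.inr k) = p'.1 ∪ p'.2 := ⟨k', hk'⟩
      simp only [dif_pos he1, dif_pos he2] at heq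
      have hLu1 : L (Sum.inr he1.choose) = p.1 ∪ p.2 := he1.choose_spec
      have hLu2 : L (Sum.inr he2.choose) = p'.1 ∪ p'.2 := he2.choose_spec
      rw [heq] at hLu1
      have huv : p.1 ∪ p.2 = p'.1 ∪ p'.2 := hLu1.symm.trans hLu2
      obtain ⟨-, -, hd12, -, -⟩ := hP p.1 hp.1 p'.2 hp'.2
      obtain ⟨-, -, hd21, -, -⟩ := hP p'.1 hp'.1 p.2 hp.2
      have hRR : p.1 = p'.1 := by
        apply Finset.Subset.antisymm
        · intro x hx
          have hx' : x ∈ p'.1 ∪ p'.2 := huv ▸ Finset.mem_union_left _ hx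
          rcases Finset.mem_union.mp hx' with h | h
          · exact h
          · exact absurd h (Finset.disjoint_left.mp hd12 hx)
        · intro x hx
          have hx' : x ∈ p.1 ∪ p.2 := huv ▸ Finset.mem_union_left _ hx
          rcases Finset.mem_union.mp hx' with h | h
          · exact h
          · exact absurd h (Finset.disjoint_left.mp hd21 hx)
      have hQQ : p.2 = p'.2 := by
        apply Finset.Subset.antisymm
        · intro x hx
          have hx' : x ∈ p'.1 ∪ p'.2 := huv ▸ Finset.mem_union_right _ hx
          rcases Finset.mem_union.mp hx' with h | h
          · exact absurd hx (Finset.disjoint_left.mp hd21 h)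
          · exact h
        · intro x hx
          have hx' : x ∈ p.1 ∪ p.2 := huv ▸ Finset.mem_union_right _ hx
          rcases Finset.mem_union.mp hx' with h | h
          · exact absurd hx (Finset.disjoint_left.mp hd12 h)
          · exact h
      exact Prod.ext hRR hQQ
  rw [Finset.card_product, Finset.card_univ, Fintype.card_fin] at hcount
  calc mc G₁ f₁ * mc G₂ f₂ ≤ ℛ.card * 𝒬.card := Nat.mul_le_mul hℛcard h𝒬card
    _ ≤ m := hcount

/-- `m_c(G₁ ∪ G₂, f₁ ∪ f₂) = m_c(G₁, f₁) · m_c(G₂, f₂)` for vertex-disjoint graphs. -/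
theorem stmt_11 {V₁ V₂ : Type*} [Fintype V₁] [Fintype V₂]
    (G₁ : SimpleGraph V₁) (G₂ : SimpleGraph V₂)
    (f₁ : V₁ → ℕ) (f₂ : V₂ → ℕ) (hf₁ : ∀ v, 0 < f₁ v) (hf₂ : ∀ v, 0 < f₂ v) :
    mc (G₁.sum G₂) (Sum.elim f₁ f₂) = mc G₁ f₁ * mc G₂ f₂ := by
  have hb₁ : ¬ Choosable (joinK G₁ (mc G₁ f₁)) (Sum.elim f₁ fun _ => Fintype.card V₁) :=
    Nat.sInf_mem (exists_bad G₁ f₁)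
  have hb₂ : ¬ Choosable (joinK G₂ (mc G₂ f₂)) (Sum.elim f₂ fun _ => Fintype.card V₂) :=
    Nat.sInf_mem (exists_bad G₂ f₂)
  have hprod := prod_bad G₁ G₂ f₁ f₂ hb₁ hb₂
  apply le_antisymm
  · exact Nat.sInf_le hprod
  · exact le_csInf (exists_bad (G₁.sum G₂) (Sum.elim f₁ f₂))
      (fun m hm => hard G₁ G₂ f₁ f₂ m hm)
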